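/- arXiv:2110.10589 — 6 statements merged into one kernel-verified Lean document; each statement's English description precedes it below -/
import Mathlib

section
/- Fix integers n ≥ 1, k ≥ 2 and 1 ≤ l ≤ k−1. Let S be any set of pairs (a,b) with 1 ≤ a < b ≤ k and let γ : {1,…,k} → ℤ be given by γ_m = #{(a,b) ∈ S : b = m} − #{(a,b) ∈ S : a = m}. Define β ∈ ℤ^k by β_m = γ_m + n for 1 ≤ m ≤ l and β_m = γ_m for l < m ≤ k (i.e. β = n·w_l + γ, where w_l is the l-th fundamental weight), and set ρ = (k−1, k−2, …, 1, 0). Let δ_1 ≥ δ_2 ≥ ⋯ ≥ δ_k be the weakly decreasing rearrangement of the k numbers β_1 + ρ_1, …, β_k + ρ_k. Then δ_l − δ_{l+1} ≥ n − k + 1; equivalently, the weight α = δ − ρ satisfies α_l − α_{l+1} ≥ n − k. -/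
/-- Fix integers `n ≥ 1`, `k ≥ 2` and `1 ≤ l ≤ k−1`.  Let `S` be a set of pairs
`(a,b)` with `1 ≤ a < b ≤ k` and let `γ m = #{(a,b) ∈ S : b = m} − #{(a,b) ∈ S : a = m}`.
Define `β = n·w_l + γ` (so `β m = γ m + n` for `m ≤ l` and `β m = γ m` otherwise),
and set `ρ = (k−1, k−2, …, 1, 0)`.  Let `δ_1 ≥ δ_2 ≥ ⋯ ≥ δ_k` be the weakly decreasing
rearrangement of the `k` numbers `β_1 + ρ_1, …, β_k + ρ_k` (given by a bijection `σ`
of `{1,…,k}`).  Then `δ_l − δ_{l+1} ≥ n − k + 1`. -/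
theorem dominant_rearrangement_gap_bound
    (n k l : ℕ) (hn : 1 ≤ n) (hk : 2 ≤ k) (hl : 1 ≤ l) (hlk : l ≤ k - 1)
    (S : Finset (ℕ × ℕ))
    (hS : ∀ p ∈ S, 1 ≤ p.1 ∧ p.1 < p.2 ∧ p.2 ≤ k)
    (γ : ℕ → ℤ)
    (hγ : ∀ m, γ m = ((S.filter (fun p => p.2 = m)).card : ℤ)
        - ((S.filter (fun p => p.1 = m)).card : ℤ))
    (β : ℕ → ℤ)
    (hβ : ∀ m, 1 ≤ m → m ≤ k → β m = if m ≤ l then γ m + (n : ℤ) else γ m)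
    (ρ : ℕ → ℤ) (hρ : ∀ m, ρ m = (k : ℤ) - m)
    (σ : ℕ → ℕ) (hσ : Set.BijOn σ (Set.Icc 1 k) (Set.Icc 1 k))
    (δ : ℕ → ℤ) (hδ : ∀ m, 1 ≤ m → m ≤ k → δ m = β (σ m) + ρ (σ m))
    (hmono : ∀ i j, 1 ≤ i → i ≤ j → j ≤ k → δ j ≤ δ i) :
    δ l - δ (l + 1) ≥ (n : ℤ) - k + 1 := by
  have hlk' : l + 1 ≤ k := by omega
  -- cardinality bounds on the filters
  have hbcard : ∀ m : ℕ, 1 ≤ m → (S.filter (fun p => p.2 = m)).card ≤ m - 1 := by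
    intro m hm
    calc (S.filter (fun p => p.2 = m)).card
        ≤ (Finset.Icc 1 (m-1)).card := by
          apply Finset.card_le_card_of_injOn (fun p => p.1)
          · intro p hp
            simp only [Finset.coe_filter, Finset.mem_coe, Finset.mem_filter, Set.mem_setOf_eq] at hp
            have h := hS p hp.1
            simp only [Finset.coe_Icc, Set.mem_Icc, Finset.mem_coe, Finset.mem_Icc]
            omega
          · intro p hp q hq hpq
            simp only [Finset.coe_filter, Set.mem_setOf_eq] at hp hq
            exact Prod.ext hpq (hp.2.trans hq.2.symm)
      _ = m - 1 := by rw [Nat.card_Icc]; omega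
  have hacard : ∀ m : ℕ, m ≤ k → (S.filter (fun p => p.1 = m)).card ≤ k - m := by
    intro m hm
    calc (S.filter (fun p => p.1 = m)).card
        ≤ (Finset.Icc (m+1) k).card := by
          apply Finset.card_le_card_of_injOn (fun p => p.2)
          · intro p hp
            simp only [Finset.coe_filter, Finset.mem_coe, Finset.mem_filter, Set.mem_setOf_eq] at hp
            have h := hS p hp.1
            simp only [Finset.coe_Icc, Set.mem_Icc, Finset.mem_coe, Finset.mem_Icc]
            omega
          · intro p hp q hq hpq
            simp only [Finset.coe_filter, Set.mem_setOf_eq] at hp hq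
            exact Prod.ext (hp.2.trans hq.2.symm) hpq
      _ = k - m := by rw [Nat.card_Icc]; omega
  -- value bounds
  have hval_hi : ∀ m, 1 ≤ m → m ≤ l → (n : ℤ) ≤ β m + ρ m := by
    intro m h1 h2
    rw [hβ m h1 (by omega), if_pos h2, hρ, hγ]
    have h3 := hacard m (by omega)
    have h4 : (0:ℤ) ≤ ((S.filter (fun p => p.2 = m)).card : ℤ) := Int.natCast_nonneg _
    omega
  have hval_lo : ∀ m, l < m → m ≤ k → β m + ρ m ≤ (k : ℤ) - 1 := by
    intro m h1 h2
    rw [hβ m (by omega) h2, if_neg (by omega), hρ, hγ]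
    have h3 := hbcard m (by omega)
    have h4 : (0:ℤ) ≤ ((S.filter (fun p => p.1 = m)).card : ℤ) := Int.natCast_nonneg _
    omega
  -- cardinality of the preimage sets
  have hAcard : ((Finset.Icc 1 k).filter (fun i => σ i ≤ l)).card = l := by
    have himg : ((Finset.Icc 1 k).filter (fun i => σ i ≤ l)).image σ = Finset.Icc 1 l := by
      ext m
      simp only [Finset.mem_image, Finset.mem_filter, Finset.mem_Icc]
      constructor
      · rintro ⟨i, ⟨⟨h1, h2⟩, h3⟩, rfl⟩
        have := hσ.mapsTo (Set.mem_Icc.mpr ⟨h1, h2⟩)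
        rw [Set.mem_Icc] at this
        exact ⟨this.1, h3⟩
      · rintro ⟨h1, h2⟩
        obtain ⟨i, hi, hσi⟩ := hσ.surjOn (Set.mem_Icc.mpr ⟨h1, by omega⟩)
        rw [Set.mem_Icc] at hi
        exact ⟨i, ⟨⟨hi.1, hi.2⟩, by omega⟩, hσi⟩
    have hinj : Set.InjOn σ ↑((Finset.Icc 1 k).filter (fun i => σ i ≤ l)) := by
      intro x hx y hy hxy
      simp only [Finset.coe_filter, Set.mem_setOf_eq, Finset.mem_Icc] at hx hy
      exact hσ.injOn (Set.mem_Icc.mpr hx.1) (Set.mem_Icc.mpr hy.1) hxy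
    rw [← Finset.card_image_of_injOn hinj, himg, Nat.card_Icc]; omega
  have hBcard : ((Finset.Icc 1 k).filter (fun i => l < σ i)).card = k - l := by
    have himg : ((Finset.Icc 1 k).filter (fun i => l < σ i)).image σ = Finset.Icc (l+1) k := by
      ext m
      simp only [Finset.mem_image, Finset.mem_filter, Finset.mem_Icc]
      constructor
      · rintro ⟨i, ⟨⟨h1, h2⟩, h3⟩, rfl⟩
        have := hσ.mapsTo (Set.mem_Icc.mpr ⟨h1, h2⟩)
        rw [Set.mem_Icc] at this
        exact ⟨by omega, this.2⟩
      · rintro ⟨h1, h2⟩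
        obtain ⟨i, hi, hσi⟩ := hσ.surjOn (Set.mem_Icc.mpr ⟨by omega, h2⟩)
        rw [Set.mem_Icc] at hi
        exact ⟨i, ⟨⟨hi.1, hi.2⟩, by omega⟩, hσi⟩
    have hinj : Set.InjOn σ ↑((Finset.Icc 1 k).filter (fun i => l < σ i)) := by
      intro x hx y hy hxy
      simp only [Finset.coe_filter, Set.mem_setOf_eq, Finset.mem_Icc] at hx hy
      exact hσ.injOn (Set.mem_Icc.mpr hx.1) (Set.mem_Icc.mpr hy.1) hxy
    rw [← Finset.card_image_of_injOn hinj, himg, Nat.card_Icc]; omega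
  -- pigeonhole: some position ≥ l has σ value ≤ l
  have hexA : ∃ i, 1 ≤ i ∧ i ≤ k ∧ l ≤ i ∧ σ i ≤ l := by
    by_contra h
    push_neg at h
    have hsub : ((Finset.Icc 1 k).filter (fun i => σ i ≤ l)) ⊆ Finset.Icc 1 (l-1) := by
      intro i hi
      simp only [Finset.mem_filter, Finset.mem_Icc] at hi ⊢
      have := h i hi.1.1 hi.1.2
      omega
    have := Finset.card_le_card hsub
    rw [hAcard, Nat.card_Icc] at this
    omega
  -- pigeonhole: some position ≤ l+1 has σ value > l
  have hexB : ∃ i, 1 ≤ i ∧ i ≤ k ∧ i ≤ l + 1 ∧ l < σ i := by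
    by_contra h
    push_neg at h
    have hsub : ((Finset.Icc 1 k).filter (fun i => l < σ i)) ⊆ Finset.Icc (l+2) k := by
      intro i hi
      simp only [Finset.mem_filter, Finset.mem_Icc] at hi ⊢
      have := h i hi.1.1 hi.1.2
      omega
    have := Finset.card_le_card hsub
    rw [hBcard, Nat.card_Icc] at this
    omega
  obtain ⟨i, hi1, hik, hli, hσil⟩ := hexA
  obtain ⟨j, hj1, hjk, hjl, hlσj⟩ := hexB
  have hσi := hσ.mapsTo (Set.mem_Icc.mpr ⟨hi1, hik⟩)
  rw [Set.mem_Icc] at hσi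
  have hσj := hσ.mapsTo (Set.mem_Icc.mpr ⟨hj1, hjk⟩)
  rw [Set.mem_Icc] at hσj
  have h1 : (n : ℤ) ≤ δ l := by
    have := hval_hi (σ i) hσi.1 hσil
    have hm := hmono l i hl hli hik
    rw [hδ i hi1 hik] at hm
    linarith
  have h2 : δ (l + 1) ≤ (k : ℤ) - 1 := by
    have := hval_lo (σ j) hlσj hσj.2
    have hm := hmono j (l+1) hj1 hjl hlk'
    rw [hδ j hj1 hjk] at hm
    linarith
  linarith
end

section
/- Let n and k be coprime integers with 1 < k < n. Let α, β : {1,…,k} → ℕ be weakly decreasing with α_k = β_k = 0 and with k·α_i ≤ (n−k)·(k−i) and k·β_i ≤ (n−k)·(k−i) for every 1 ≤ i ≤ k (that is, α, β ∈ 𝒰𝒫_{n,k}). Suppose γ : {1,…,k} → ℤ satisfies the Littlewood–Richardson bounds α_1 − α_{k−i+1} ≤ γ_i ≤ α_1 + β_i for all 1 ≤ i ≤ k. Then γ_i − γ_{i+1} < n − k for every 1 ≤ i ≤ k−1. -/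
/-- Let `n` and `k` be coprime with `1 < k < n`.  Let `α, β ∈ 𝒰𝒫_{n,k}`
(weakly decreasing, `α_k = β_k = 0`, `k·α_i ≤ (n−k)(k−i)` and `k·β_i ≤ (n−k)(k−i)`).
Suppose `γ` satisfies the Littlewood–Richardson bounds
`α_1 − α_{k−i+1} ≤ γ_i ≤ α_1 + β_i` for all `1 ≤ i ≤ k`.
Then `γ_i − γ_{i+1} < n − k` for every `1 ≤ i ≤ k−1`. -/
theorem upper_triangular_weights_give_CM_bound
    (n k : ℕ) (hcop : Nat.Coprime n k) (hk : 1 < k) (hkn : k < n)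
    (α β : ℕ → ℕ)
    (hαdec : ∀ i j, 1 ≤ i → i ≤ j → j ≤ k → α j ≤ α i)
    (hβdec : ∀ i j, 1 ≤ i → i ≤ j → j ≤ k → β j ≤ β i)
    (hαk : α k = 0) (hβk : β k = 0)
    (hαUT : ∀ i, 1 ≤ i → i ≤ k → k * α i ≤ (n - k) * (k - i))
    (hβUT : ∀ i, 1 ≤ i → i ≤ k → k * β i ≤ (n - k) * (k - i))
    (γ : ℕ → ℤ)
    (hγlo : ∀ i, 1 ≤ i → i ≤ k → (α 1 : ℤ) - (α (k - i + 1) : ℤ) ≤ γ i)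
    (hγhi : ∀ i, 1 ≤ i → i ≤ k → γ i ≤ (α 1 : ℤ) + (β i : ℤ))
    (i : ℕ) (hi : 1 ≤ i) (hik : i ≤ k - 1) :
    γ i - γ (i + 1) < (n : ℤ) - (k : ℤ) := by
  have hik' : i ≤ k := by omega
  have hb : k * β i ≤ (n - k) * (k - i) := hβUT i hi hik'
  have ha : k * α (k - i) ≤ (n - k) * (k - (k - i)) := hαUT (k - i) (by omega) (by omega)
  have hki : k - (k - i) = i := by omega
  rw [hki] at ha
  -- strictness: β i + α (k - i) < n - k
  have hstrict : β i + α (k - i) < n - k := by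
    by_contra h
    push_neg at h
    have hsum : k * (β i + α (k - i)) ≥ k * (n - k) := by
      exact Nat.mul_le_mul_left k h
    have hkk : k * (n - k) = (n - k) * (k - i) + (n - k) * i := by
      rw [← Nat.mul_add]
      rw [Nat.mul_comm]
      congr 1
      omega
    have heq : k * β i = (n - k) * (k - i) := by
      rw [Nat.mul_add] at hsum
      omega
    have hcop2 : Nat.Coprime (n - k) k :=
      (Nat.coprime_sub_self_left (le_of_lt hkn)).mpr hcop
    have hdvd : k ∣ (n - k) * (k - i) := ⟨β i, heq.symm⟩
    have : k ∣ k - i := (Nat.Coprime.dvd_of_dvd_mul_left hcop2.symm hdvd)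
    have := Nat.le_of_dvd (by omega) this
    omega
  have h1 : γ i ≤ (α 1 : ℤ) + (β i : ℤ) := hγhi i hi hik'
  have h2 : (α 1 : ℤ) - (α (k - (i + 1) + 1) : ℤ) ≤ γ (i + 1) :=
    hγlo (i + 1) (by omega) (by omega)
  have hsub : k - (i + 1) + 1 = k - i := by omega
  rw [hsub] at h2
  have hcast : ((n - k : ℕ) : ℤ) = (n : ℤ) - (k : ℤ) := by
    have := le_of_lt hkn; push_cast [Nat.cast_sub this]; ring
  have : (β i : ℤ) + (α (k - i) : ℤ) < (n : ℤ) - (k : ℤ) := by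
    rw [← hcast]; exact_mod_cast hstrict
  omega
end

section
/- Let n and k be coprime integers with 1 < k < n, and set A_m = ⌊(n−k)(k−m)/k⌋ for 0 ≤ m ≤ k. Let β : {1,…,k} → ℕ be weakly decreasing with β_k = 0 and suppose β ∉ 𝒰𝒫_{n,k}; let l = max{ i ∈ {1,…,k−1} : k·β_i > (n−k)(k−i) } (which exists by assumption). Then: (a) β_l + A_{k−l} ≥ n − k; and (b) β_{l+i} ≤ A_i − A_{k−l} for every integer 1 ≤ i ≤ k − l − 1. -/
/-- Let `n` and `k` be coprime with `1 < k < n`, and set `A m = ⌊(n−k)(k−m)/k⌋`.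
Let `β` be a weakly decreasing partition with `β_k = 0` not in `𝒰𝒫_{n,k}`, and let
`l` be the largest index `1 ≤ l ≤ k−1` with `k·β_l > (n−k)(k−l)`.  Then:
(a) `β_l + A_{k−l} ≥ n − k`; and
(b) `β_{l+i} ≤ A_i − A_{k−l}` for every `1 ≤ i ≤ k − l − 1`. -/
theorem maximality_of_upper_triangular_collection
    (n k : ℕ) (hcop : Nat.Coprime n k) (hk : 1 < k) (hkn : k < n)
    (A : ℕ → ℕ) (hA : ∀ m, A m = (n - k) * (k - m) / k)
    (β : ℕ → ℕ)
    (hβdec : ∀ i j, 1 ≤ i → i ≤ j → j ≤ k → β j ≤ β i)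
    (hβk : β k = 0)
    (l : ℕ) (hl : 1 ≤ l) (hlk : l ≤ k - 1)
    (hlviol : (n - k) * (k - l) < k * β l)
    (hlmax : ∀ i, l < i → i ≤ k - 1 → k * β i ≤ (n - k) * (k - i)) :
    n - k ≤ β l + A (k - l) ∧
      ∀ i, 1 ≤ i → i ≤ k - l - 1 → (β (l + i) : ℤ) ≤ (A i : ℤ) - (A (k - l) : ℤ) := by
  have hk0 : 0 < k := by omega
  set d := n - k with hd
  have hAkl : A (k - l) = d * l / k := by
    rw [hA]
    congr 2
    omega
  constructor
  · -- (a)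
    have h1 : d * (k - l) / k < β l := by
      rw [Nat.div_lt_iff_lt_mul hk0, Nat.mul_comm (β l) k]
      exact hlviol
    have hsum : d * (k - l) + d * l = d * k := by
      rw [← Nat.mul_add]
      congr 1
      omega
    have hadd := Nat.add_div (a := d * (k - l)) (b := d * l) hk0
    rw [hsum, Nat.mul_div_cancel _ hk0] at hadd
    rw [hAkl]
    split at hadd <;> linarith
  · -- (b)
    intro i hi1 hi2
    have hb := hlmax (l + i) (by omega) (by omega)
    have hβle : β (l + i) ≤ d * (k - (l + i)) / k := by
      rw [Nat.le_div_iff_mul_le hk0, Nat.mul_comm]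
      exact hb
    have hsplit : d * (k - (l + i)) + d * l = d * (k - i) := by
      rw [← Nat.mul_add]
      congr 1
      omega
    have hdiv : d * (k - (l + i)) / k + d * l / k ≤ d * (k - i) / k := by
      rw [Nat.le_div_iff_mul_le hk0, Nat.add_mul, ← hsplit]
      exact Nat.add_le_add (Nat.div_mul_le_self _ _) (Nat.div_mul_le_self _ _)
    have hAi : A i = d * (k - i) / k := by rw [hA]
    have key : β (l + i) + A (k - l) ≤ A i := by
      rw [hAkl, hAi]
      linarith
    have : (β (l + i) : ℤ) + (A (k - l) : ℤ) ≤ (A i : ℤ) := by exact_mod_cast key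
    linarith
end

section
/- Let n and k be coprime integers with 0 < k < n. For a k-element subset P = {p_1 < p_2 < ⋯ < p_k} of {0,1,…,n−1}, let α(P) denote the partition with α(P)_i = p_{k+1−i} − (k−i) for 1 ≤ i ≤ k. Then there is exactly one residue c ∈ ℤ/nℤ such that the rotated subset (P − c) mod n = {(p − c) mod n : p ∈ P} satisfies k·α((P − c) mod n)_i ≤ (n−k)·(k−i) for all 1 ≤ i ≤ k, i.e. such that the Young diagram of the rotated binary sequence is strictly upper triangular. -/
/-- A finite subset `Q ⊆ ℕ` (intended: a `k`-element subset of `{0,…,n−1}`) has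
strictly upper triangular associated Young diagram: if `q 1 < q 2 < ⋯ < q k`
enumerates `Q`, the partition `α(Q)_i = q_{k+1−i} − (k−i)` satisfies
`k · α(Q)_i ≤ (n−k) · (k−i)` for all `1 ≤ i ≤ k`. -/
def IsUpperTriangular (n k : ℕ) (Q : Finset ℕ) : Prop :=
  ∃ q : ℕ → ℕ,
    (∀ j₁ j₂, 1 ≤ j₁ → j₁ < j₂ → j₂ ≤ k → q j₁ < q j₂) ∧
    Q = (Finset.Icc 1 k).image q ∧
    ∀ i, 1 ≤ i → i ≤ k → k * (q (k + 1 - i) - (k - i)) ≤ (n - k) * (k - i)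

lemma mono_lt_iff (k : ℕ) (q : ℕ → ℕ)
    (hmono : ∀ j₁ j₂, 1 ≤ j₁ → j₁ < j₂ → j₂ ≤ k → q j₁ < q j₂)
    {m j : ℕ} (hm : 1 ≤ m) (hmk : m ≤ k) (hj : 1 ≤ j) (hjk : j ≤ k) :
    q m < q j ↔ m < j := by
  constructor
  · intro h
    by_contra hle
    push_neg at hle
    rcases eq_or_lt_of_le hle with rfl | hlt
    · exact lt_irrefl _ h
    · exact absurd (hmono j m hj hlt hmk) (by omega)
  · intro h; exact hmono m j hm h hjk

lemma count_lt_of_mono (k : ℕ) (q : ℕ → ℕ)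
    (hmono : ∀ j₁ j₂, 1 ≤ j₁ → j₁ < j₂ → j₂ ≤ k → q j₁ < q j₂)
    (j : ℕ) (hj1 : 1 ≤ j) (hjk : j ≤ k) :
    (((Finset.Icc 1 k).image q).filter (· < q j)).card = j - 1 := by
  have hset : ((Finset.Icc 1 k).image q).filter (· < q j)
      = (Finset.Icc 1 (j-1)).image q := by
    ext x
    simp only [Finset.mem_filter, Finset.mem_image, Finset.mem_Icc]
    constructor
    · rintro ⟨⟨m, ⟨hm1, hmk⟩, rfl⟩, hlt⟩
      have := (mono_lt_iff k q hmono hm1 hmk hj1 hjk).1 hlt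
      exact ⟨m, ⟨hm1, by omega⟩, rfl⟩
    · rintro ⟨m, ⟨hm1, hmj⟩, rfl⟩
      have hmk : m ≤ k := by omega
      exact ⟨⟨m, ⟨hm1, hmk⟩, rfl⟩, (mono_lt_iff k q hmono hm1 hmk hj1 hjk).2 (by omega)⟩
  rw [hset, Finset.card_image_of_injOn ?_, Nat.card_Icc]
  · omega
  intro a ha b hb hab
  simp only [Finset.coe_Icc, Set.mem_Icc] at ha hb
  by_contra hne
  rcases Nat.lt_or_ge a b with h | h
  · exact absurd hab (Nat.ne_of_lt (hmono a b ha.1 h (by omega)))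
  · have : b < a := by omega
    exact absurd hab.symm (Nat.ne_of_lt (hmono b a hb.1 this (by omega)))

lemma q_ge (k : ℕ) (q : ℕ → ℕ)
    (hmono : ∀ j₁ j₂, 1 ≤ j₁ → j₁ < j₂ → j₂ ≤ k → q j₁ < q j₂)
    (j : ℕ) (hj1 : 1 ≤ j) (hjk : j ≤ k) : j - 1 ≤ q j := by
  induction j with
  | zero => omega
  | succ m ih =>
    rcases Nat.eq_or_lt_of_le hj1 with h | h
    · omega
    · have hm1 : 1 ≤ m := by omega
      have := hmono m (m+1) hm1 (by omega) hjk
      have := ih hm1 (by omega)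
      omega

lemma ut_iff (n k : ℕ) (hk : 0 < k) (hkn : k ≤ n) (Q : Finset ℕ) (hQ : Q.card = k) :
    IsUpperTriangular n k Q ↔ ∀ x ∈ Q, k * x ≤ n * (Q.filter (· < x)).card := by
  constructor
  · rintro ⟨q, hmono, himg, hcond⟩
    intro x hx
    rw [himg] at hx
    obtain ⟨j, hj, rfl⟩ := Finset.mem_image.1 hx
    rw [Finset.mem_Icc] at hj
    have hcnt : (Q.filter (· < q j)).card = j - 1 := by
      rw [himg]; exact count_lt_of_mono k q hmono j hj.1 hj.2
    rw [hcnt]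
    have h1 : k + 1 - (k + 1 - j) = j := by omega
    have h2 : k - (k + 1 - j) = j - 1 := by omega
    have hc := hcond (k + 1 - j) (by omega) (by omega)
    rw [h1, h2] at hc
    have hBA : j - 1 ≤ q j := q_ge k q hmono j hj.1 hj.2
    have e1 : k * (q j - (j-1)) + k * (j-1) = k * q j := by
      rw [← Nat.mul_add, Nat.sub_add_cancel hBA]
    have e2 : (n - k) * (j-1) + k * (j-1) = n * (j-1) := by
      rw [← Nat.add_mul, Nat.sub_add_cancel hkn]
    calc k * q j = k * (q j - (j-1)) + k * (j-1) := e1.symm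
      _ ≤ (n-k) * (j-1) + k * (j-1) := Nat.add_le_add_right hc _
      _ = n * (j-1) := e2
  · intro h
    set e := Q.orderIsoOfFin hQ with he
    set q : ℕ → ℕ := fun j => if hj : j - 1 < k then (e ⟨j-1, hj⟩ : ℕ) else 0 with hqdef
    have hmono : ∀ j₁ j₂, 1 ≤ j₁ → j₁ < j₂ → j₂ ≤ k → q j₁ < q j₂ := by
      intro j₁ j₂ h1 h12 h2k
      rw [hqdef]
      dsimp only
      rw [dif_pos (show j₁ - 1 < k by omega), dif_pos (show j₂ - 1 < k by omega)]
      have : (⟨j₁-1, by omega⟩ : Fin k) < ⟨j₂-1, by omega⟩ := by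
        simp [Fin.lt_def]; omega
      exact Subtype.coe_lt_coe.2 (e.lt_iff_lt.2 this)
    have himg : Q = (Finset.Icc 1 k).image q := by
      ext x
      simp only [Finset.mem_image, Finset.mem_Icc]
      constructor
      · intro hx
        refine ⟨(e.symm ⟨x, hx⟩ : Fin k) + 1, ⟨by omega, ?_⟩, ?_⟩
        · have := (e.symm ⟨x, hx⟩).isLt; omega
        · rw [hqdef]
          dsimp only
          rw [dif_pos (by simp)]
          have : (⟨(e.symm ⟨x, hx⟩ : Fin k) + 1 - 1, by simp⟩ : Fin k)
              = e.symm ⟨x, hx⟩ := by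
            ext; simp
          rw [this]
          simp
      · rintro ⟨j, ⟨hj1, hjk⟩, rfl⟩
        rw [hqdef]
        dsimp only
        rw [dif_pos (show j - 1 < k by omega)]
        exact (e ⟨j-1, by omega⟩).2
    refine ⟨q, hmono, himg, ?_⟩
    intro i hi1 hik
    have hj1 : 1 ≤ k + 1 - i := by omega
    have hjk : k + 1 - i ≤ k := by omega
    have hxQ : q (k+1-i) ∈ Q := by
      rw [hqdef]; dsimp only
      rw [dif_pos (show k+1-i-1 < k by omega)]
      exact (e ⟨k+1-i-1, by omega⟩).2
    have hcnt' : (Q.filter (· < q (k+1-i))).card = (k+1-i) - 1 := by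
      rw [himg]; exact count_lt_of_mono k q hmono _ hj1 hjk
    have hc := h (q (k+1-i)) hxQ
    rw [hcnt'] at hc
    have h2 : k - i = (k+1-i) - 1 := by omega
    rw [h2]
    have hBA : (k+1-i) - 1 ≤ q (k+1-i) := q_ge k q hmono _ hj1 hjk
    have e1 : k * (q (k+1-i) - ((k+1-i)-1)) + k * ((k+1-i)-1) = k * q (k+1-i) := by
      rw [← Nat.mul_add, Nat.sub_add_cancel hBA]
    have e2 : (n - k) * ((k+1-i)-1) + k * ((k+1-i)-1) = n * ((k+1-i)-1) := by
      rw [← Nat.add_mul, Nat.sub_add_cancel hkn]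
    have hfin : k * (q (k+1-i) - ((k+1-i)-1)) + k * ((k+1-i)-1)
        ≤ (n - k) * ((k+1-i)-1) + k * ((k+1-i)-1) := by
      rw [e1, e2]; exact hc
    exact Nat.le_of_add_le_add_right hfin

lemma rot_eq (n c p : ℕ) (hc : c < n) (hp : p < n) :
    (p + (n - c)) % n = if c ≤ p then p - c else p + n - c := by
  split_ifs with h
  · have h2 : p + (n - c) = (p - c) + n := by omega
    rw [h2, Nat.add_mod_right, Nat.mod_eq_of_lt (by omega)]
  · rw [Nat.mod_eq_of_lt (by omega)]; omega

lemma rot_injOn (n c : ℕ) (hc : c < n) (p p' : ℕ) (hp : p < n) (hp' : p' < n)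
    (h : (p + (n - c)) % n = (p' + (n - c)) % n) : p = p' := by
  rw [rot_eq n c p hc hp, rot_eq n c p' hc hp'] at h
  split_ifs at h <;> omega

def Fv (n k : ℕ) (P : Finset ℕ) (x : ℕ) : ℤ :=
  (n : ℤ) * ((P.filter (· < x)).card : ℤ) - (k : ℤ) * (x : ℤ)

lemma key (n k c : ℕ) (hk : 0 < k) (hkn : k < n) (hc : c < n)
    (P : Finset ℕ) (hPcard : P.card = k) (hPsub : ∀ p ∈ P, p < n)
    (p : ℕ) (hp : p ∈ P) :
    (k * ((p + (n - c)) % n) ≤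
      n * (((P.image (fun p' => (p' + (n - c)) % n)).filter
        (· < (p + (n - c)) % n)).card))
    ↔ Fv n k P c ≤ Fv n k P p := by
  set rot : ℕ → ℕ := fun p' => (p' + (n - c)) % n with hrot
  have himg : (P.image rot).filter (· < rot p)
      = (P.filter (fun p' => rot p' < rot p)).image rot :=
    Finset.filter_image
  have hcard : ((P.image rot).filter (· < rot p)).card
      = (P.filter (fun p' => rot p' < rot p)).card := by
    rw [himg]
    apply Finset.card_image_of_injOn
    intro x hx y hy hxy
    simp only [Finset.coe_filter, Set.mem_setOf_eq] at hx hy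
    exact rot_injOn n c hc x y (hPsub x hx.1) (hPsub y hy.1) hxy
  rw [hcard]
  have hpn := hPsub p hp
  by_cases hcp : c ≤ p
  · have hrp : rot p = p - c := by rw [hrot]; dsimp only; rw [rot_eq n c p hc hpn, if_pos hcp]
    have hset : P.filter (fun p' => rot p' < rot p)
        = P.filter (fun p' => c ≤ p' ∧ p' < p) := by
      apply Finset.filter_congr
      intro x hx
      have hxn := hPsub x hx
      rw [hrp, hrot]
      dsimp only
      rw [rot_eq n c x hc hxn]
      split_ifs with h1 <;> omega
    have hrp' : (p + (n - c)) % n = p - c := hrp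
    rw [hset, hrp']
    have hs1 : (P.filter (· < p)).filter (· < c) = P.filter (· < c) := by
      rw [Finset.filter_filter]
      apply Finset.filter_congr
      intro x hx; omega
    have hs2 : (P.filter (· < p)).filter (fun x => ¬ x < c)
        = P.filter (fun p' => c ≤ p' ∧ p' < p) := by
      rw [Finset.filter_filter]
      apply Finset.filter_congr
      intro x hx; omega
    have hsplit : (P.filter (· < c)).card
        + (P.filter (fun p' => c ≤ p' ∧ p' < p)).card
        = (P.filter (· < p)).card := by
      rw [← hs1, ← hs2]
      exact Finset.card_filter_add_card_filter_not _
    unfold Fv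
    set A := (P.filter (· < c)).card with hA
    set B := (P.filter (· < p)).card with hB
    set C := (P.filter (fun p' => c ≤ p' ∧ p' < p)).card with hC
    have h2 : (A : ℤ) + (C : ℤ) = (B : ℤ) := by exact_mod_cast hsplit
    have h2n : (n : ℤ) * ((A : ℤ) + (C : ℤ)) = (n : ℤ) * B := by rw [h2]
    have hgoal : (k : ℤ) * ((p : ℤ) - c) ≤ (n : ℤ) * C ↔
        (n : ℤ) * A - k * c ≤ (n : ℤ) * B - k * p := by
      constructor <;> intro hh <;> linarith [h2n]
    rw [← hgoal]
    zify [hcp]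
  · push_neg at hcp
    have hrp : rot p = p + n - c := by
      rw [hrot]; dsimp only; rw [rot_eq n c p hc hpn, if_neg (by omega)]
    have hset : P.filter (fun p' => rot p' < rot p)
        = P.filter (fun p' => c ≤ p' ∨ p' < p) := by
      apply Finset.filter_congr
      intro x hx
      have hxn := hPsub x hx
      rw [hrp, hrot]
      dsimp only
      rw [rot_eq n c x hc hxn]
      split_ifs with h1 <;> omega
    have hrp' : (p + (n - c)) % n = p + n - c := hrp
    rw [hset, hrp']
    have hs1 : (P.filter (fun p' => c ≤ p' ∨ p' < p)).filter (fun x => c ≤ x)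
        = P.filter (fun x => c ≤ x) := by
      rw [Finset.filter_filter]
      apply Finset.filter_congr
      intro x hx; omega
    have hs2 : (P.filter (fun p' => c ≤ p' ∨ p' < p)).filter (fun x => ¬ c ≤ x)
        = P.filter (· < p) := by
      rw [Finset.filter_filter]
      apply Finset.filter_congr
      intro x hx; omega
    have hsplit : (P.filter (fun x => c ≤ x)).card + (P.filter (· < p)).card
        = (P.filter (fun p' => c ≤ p' ∨ p' < p)).card := by
      rw [← hs1, ← hs2]
      exact Finset.card_filter_add_card_filter_not _
    have hs3 : P.filter (fun x => ¬ x < c) = P.filter (fun x => c ≤ x) := by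
      apply Finset.filter_congr
      intro x hx; omega
    have hPk : (P.filter (· < c)).card + (P.filter (fun x => c ≤ x)).card = k := by
      rw [← hs3, Finset.card_filter_add_card_filter_not, hPcard]
    unfold Fv
    set A := (P.filter (· < c)).card with hA
    set B := (P.filter (· < p)).card with hB
    set C := (P.filter (fun p' => c ≤ p' ∨ p' < p)).card with hC
    set D := (P.filter (fun x => c ≤ x)).card with hD
    have h2 : (D : ℤ) + (B : ℤ) = (C : ℤ) := by exact_mod_cast hsplit
    have h3 : (A : ℤ) + (D : ℤ) = (k : ℤ) := by exact_mod_cast hPk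
    have h2n : (n : ℤ) * ((D : ℤ) + (B : ℤ)) = (n : ℤ) * C := by rw [h2]
    have h3n : (n : ℤ) * ((A : ℤ) + (D : ℤ)) = (n : ℤ) * k := by rw [h3]
    have hgoal : (k : ℤ) * ((p : ℤ) + n - c) ≤ (n : ℤ) * C ↔
        (n : ℤ) * A - k * c ≤ (n : ℤ) * B - k * p := by
      constructor <;> intro hh <;> linarith [h2n, h3n]
    rw [← hgoal]
    zify [show c ≤ p + n by omega]

lemma Fv_inj (n k : ℕ) (hcop : Nat.Coprime n k) (P : Finset ℕ)
    {p₁ p₂ : ℕ} (h1 : p₁ < n) (h2 : p₂ < n)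
    (h : Fv n k P p₁ = Fv n k P p₂) : p₁ = p₂ := by
  unfold Fv at h
  have hdvd : (n : ℤ) ∣ (k : ℤ) * ((p₁ : ℤ) - p₂) := by
    refine ⟨((P.filter (· < p₁)).card : ℤ) - ((P.filter (· < p₂)).card : ℤ), ?_⟩
    linarith [h]
  have hco : IsCoprime (n : ℤ) (k : ℤ) := by
    rw [Int.isCoprime_iff_gcd_eq_one]
    exact_mod_cast hcop
  have hdvd2 : (n : ℤ) ∣ ((p₁ : ℤ) - p₂) := hco.dvd_of_dvd_mul_left hdvd
  have hdvd3 : n ∣ ((p₁ : ℤ) - p₂).natAbs := by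
    rwa [Int.natCast_dvd_natCast.symm, Int.dvd_natAbs]
  have : ((p₁ : ℤ) - p₂).natAbs = 0 :=
    Nat.eq_zero_of_dvd_of_lt hdvd3 (by omega) |>.symm ▸ rfl
  omega

lemma mem_of_cond (n k c : ℕ) (hk : 0 < k) (hc : c < n)
    (P : Finset ℕ) (hPcard : P.card = k) (hPsub : ∀ p ∈ P, p < n)
    (h : ∀ x ∈ P.image (fun p' => (p' + (n - c)) % n),
      k * x ≤ n * (((P.image (fun p' => (p' + (n - c)) % n)).filter (· < x)).card)) :
    c ∈ P := by
  set Q := P.image (fun p' => (p' + (n - c)) % n) with hQ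
  have hQne : Q.Nonempty := by
    apply Finset.image_nonempty.2
    rw [← Finset.card_pos, hPcard]; exact hk
  set x₀ := Q.min' hQne with hx₀
  have hx₀Q : x₀ ∈ Q := Q.min'_mem hQne
  have hfil : Q.filter (· < x₀) = ∅ := by
    apply Finset.filter_eq_empty_iff.2
    intro y hy
    exact not_lt.2 (Q.min'_le y hy)
  have := h x₀ hx₀Q
  rw [hfil] at this
  simp at this
  have hx₀0 : x₀ = 0 := by
    rcases this with h' | h'
    · omega
    · exact h'
  obtain ⟨p, hpP, hp0⟩ := Finset.mem_image.1 (hx₀0 ▸ hx₀Q)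
  have hpn := hPsub p hpP
  rw [rot_eq n c p hc hpn] at hp0
  split_ifs at hp0 with hcase
  · have : p = c := by omega
    exact this ▸ hpP
  · omega


/-- Let `n` and `k` be coprime with `0 < k < n`.  For any `k`-element subset `P`
of `{0,…,n−1}` there is exactly one residue `c ∈ ℤ/nℤ` such that the rotated
subset `(P − c) mod n` has strictly upper triangular Young diagram. -/
theorem unique_upper_triangular_rotation
    (n k : ℕ) (hcop : Nat.Coprime n k) (hk : 0 < k) (hkn : k < n)
    (P : Finset ℕ) (hPcard : P.card = k) (hPsub : ∀ p ∈ P, p < n) :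
    ∃! c : ZMod n,
      IsUpperTriangular n k (P.image fun p : ℕ => ((p : ZMod n) - c).val) := by
  haveI : NeZero n := ⟨by omega⟩
  have himg : ∀ c' : ZMod n,
      (P.image fun p : ℕ => ((p : ZMod n) - c').val)
        = P.image (fun p => (p + (n - c'.val)) % n) := by
    intro c'
    apply Finset.image_congr
    intro p hp
    have hv : c'.val < n := ZMod.val_lt c'
    have hcast : (p : ZMod n) - c' = ((p + (n - c'.val) : ℕ) : ZMod n) := by
      push_cast [Nat.cast_sub hv.le]
      rw [ZMod.natCast_self, ZMod.natCast_val]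
      ring_nf
      simp [ZMod.cast_id]
    show ((p : ZMod n) - c').val = (p + (n - c'.val)) % n
    rw [hcast, ZMod.val_natCast]
  have hQcard : ∀ c, c < n → (P.image (fun p => (p + (n - c)) % n)).card = k := by
    intro c hc
    rw [Finset.card_image_of_injOn, hPcard]
    intro x hx y hy hxy
    exact rot_injOn n c hc x y (hPsub x hx) (hPsub y hy) hxy
  have hPne : P.Nonempty := by rw [← Finset.card_pos, hPcard]; exact hk
  obtain ⟨c₀, hc₀P, hc₀min⟩ := P.exists_min_image (Fv n k P) hPne
  have hc₀n : c₀ < n := hPsub c₀ hc₀P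
  refine ⟨(c₀ : ZMod n), ?_, ?_⟩
  · show IsUpperTriangular n k (P.image fun p : ℕ => ((p : ZMod n) - (c₀ : ZMod n)).val)
    rw [himg, ZMod.val_natCast_of_lt hc₀n]
    rw [ut_iff n k hk hkn.le _ (hQcard c₀ hc₀n)]
    intro x hx
    obtain ⟨p, hpP, rfl⟩ := Finset.mem_image.1 hx
    exact (key n k c₀ hk hkn hc₀n P hPcard hPsub p hpP).2 (hc₀min p hpP)
  · intro y hy
    rw [himg] at hy
    set cy := y.val with hcy
    have hcyn : cy < n := ZMod.val_lt y
    rw [ut_iff n k hk hkn.le _ (hQcard cy hcyn)] at hy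
    have hcyP : cy ∈ P := mem_of_cond n k cy hk hcyn P hPcard hPsub hy
    have hcymin : ∀ p ∈ P, Fv n k P cy ≤ Fv n k P p := by
      intro p hpP
      refine (key n k cy hk hkn hcyn P hPcard hPsub p hpP).1 ?_
      exact hy _ (Finset.mem_image_of_mem _ hpP)
    have heq : Fv n k P cy = Fv n k P c₀ :=
      le_antisymm (hcymin c₀ hc₀P) (hc₀min cy hcyP)
    have : cy = c₀ := Fv_inj n k hcop P hcyn hc₀n heq
    rw [← this]
    exact (ZMod.natCast_rightInverse y).symm
end

section
/- Let n and k be integers with 1 < k < n. Let α be a partition with at most k parts, α_k = 0 and α_1 > n − k. Let i be an integer with 1 ≤ i ≤ n such that the k integers α_1 + (k−1), α_2 + (k−2), …, α_{k−1} + 1, i are pairwise distinct; list them in strictly decreasing order as δ_1 > δ_2 > ⋯ > δ_k, set β_j = δ_j − (k−j), and define β̃ by β̃_j = β_j − β_k. Then β̃_1 < α_1. -/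
/-- Let `1 < k < n`.  Let `α` be a partition with at most `k` parts, `α_k = 0` and
`α_1 > n − k`.  Let `1 ≤ i ≤ n` be such that the `k` integers
`α_1+(k−1), α_2+(k−2), …, α_{k−1}+1, i` are pairwise distinct; list them strictly
decreasingly as `δ_1 > ⋯ > δ_k`, set `β_j = δ_j − (k−j)` and `β̃_j = β_j − β_k`.
Then `β̃_1 < α_1`. -/
theorem staircase_term_decreases_first_entry
    (n k : ℕ) (hk : 1 < k) (hkn : k < n)
    (α : ℕ → ℕ)
    (hαdec : ∀ i j, 1 ≤ i → i ≤ j → j ≤ k → α j ≤ α i)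
    (hαk : α k = 0) (hα1 : n - k < α 1)
    (i : ℕ) (hi1 : 1 ≤ i) (hin : i ≤ n)
    (f : ℕ → ℕ)
    (hf : ∀ j, 1 ≤ j → j ≤ k - 1 → f j = α j + (k - j)) (hfk : f k = i)
    (hdist : Set.InjOn f (Set.Icc 1 k))
    (δ : ℕ → ℕ)
    (hδdec : ∀ j₁ j₂, 1 ≤ j₁ → j₁ < j₂ → j₂ ≤ k → δ j₂ < δ j₁)
    (hδim : (Finset.Icc 1 k).image δ = (Finset.Icc 1 k).image f)
    (βt : ℕ → ℕ)
    (hβt : ∀ j, 1 ≤ j → j ≤ k → (βt j : ℤ) = (δ j : ℤ) - ((k : ℤ) - j) - (δ k : ℤ)) :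
    βt 1 < α 1 := by
  have hk1 : 1 ≤ k := hk.le
  -- every value of f is ≤ α 1 + (k-1)
  have hub : ∀ j, 1 ≤ j → j ≤ k → f j ≤ α 1 + (k - 1) := by
    intro j hj1 hjk
    rcases le_or_gt j (k - 1) with h | h
    · rw [hf j hj1 h]
      exact Nat.add_le_add (hαdec 1 j le_rfl hj1 (le_trans h (Nat.sub_le k 1)))
        (Nat.sub_le_sub_left hj1 k)
    · have hjk' : j = k := le_antisymm hjk (by omega)
      rw [hjk', hfk]
      omega
  -- every value of f is ≥ 1
  have hlb : ∀ j, 1 ≤ j → j ≤ k → 1 ≤ f j := by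
    intro j hj1 hjk
    rcases le_or_gt j (k - 1) with h | h
    · rw [hf j hj1 h]; omega
    · have hjk' : j = k := le_antisymm hjk (by omega)
      rw [hjk', hfk]; exact hi1
  -- δ 1 is the max of the δ-image
  have hδ1max : ∀ j, 1 ≤ j → j ≤ k → δ j ≤ δ 1 := by
    intro j hj1 hjk
    rcases eq_or_lt_of_le hj1 with h | h
    · rw [← h]
    · exact (hδdec 1 j le_rfl h hjk).le
  -- δ 1 ≤ α 1 + (k-1)
  have hδ1le : δ 1 ≤ α 1 + (k - 1) := by
    have h1 : δ 1 ∈ (Finset.Icc 1 k).image δ :=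
      Finset.mem_image_of_mem δ (Finset.mem_Icc.mpr ⟨le_rfl, hk1⟩)
    rw [hδim] at h1
    obtain ⟨j, hj, hje⟩ := Finset.mem_image.mp h1
    rw [← hje]
    exact hub j (Finset.mem_Icc.mp hj).1 (Finset.mem_Icc.mp hj).2
  -- α 1 + (k-1) ≤ δ 1
  have hδ1ge : α 1 + (k - 1) ≤ δ 1 := by
    have h1 : f 1 ∈ (Finset.Icc 1 k).image δ := by
      rw [hδim]
      exact Finset.mem_image_of_mem f (Finset.mem_Icc.mpr ⟨le_rfl, hk1⟩)
    obtain ⟨j, hj, hje⟩ := Finset.mem_image.mp h1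
    have := hδ1max j (Finset.mem_Icc.mp hj).1 (Finset.mem_Icc.mp hj).2
    have hf1 : f 1 = α 1 + (k - 1) := hf 1 le_rfl (by omega)
    omega
  have hδ1 : δ 1 = α 1 + (k - 1) := le_antisymm hδ1le hδ1ge
  -- δ k ≥ 1
  have hδk : 1 ≤ δ k := by
    have h1 : δ k ∈ (Finset.Icc 1 k).image δ :=
      Finset.mem_image_of_mem δ (Finset.mem_Icc.mpr ⟨hk1, le_rfl⟩)
    rw [hδim] at h1
    obtain ⟨j, hj, hje⟩ := Finset.mem_image.mp h1
    rw [← hje]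
    exact hlb j (Finset.mem_Icc.mp hj).1 (Finset.mem_Icc.mp hj).2
  have hb := hβt 1 le_rfl hk1
  have : (βt 1 : ℤ) < (α 1 : ℤ) := by
    rw [hb]
    have : (δ 1 : ℤ) = (α 1 : ℤ) + ((k : ℤ) - 1) := by
      rw [hδ1]; push_cast [Nat.cast_sub hk1]; ring
    rw [this]
    have : (1 : ℤ) ≤ (δ k : ℤ) := by exact_mod_cast hδk
    push_cast
    linarith
  exact_mod_cast this
end

section
/- Let n and k be coprime integers with 1 < k < n. Define a relation on partitions with at most k parts and last part 0 by declaring α ⊳ β̃ whenever α is not strictly upper triangular (α ∉ 𝒰𝒫_{n,k}) and β̃ is the normalized Borel–Weil–Bott term of α at some integer 1 ≤ i ≤ n (i.e. the k integers α_1 + (k−1), α_2 + (k−2), …, α_{k−1} + 1, i are pairwise distinct, δ is their strictly decreasing rearrangement, β_j = δ_j − (k−j), and β̃_j = β_j − β_k). Then there is no infinite sequence α⁰ ⊳ α¹ ⊳ α² ⊳ ⋯ ; equivalently, iterating the staircase resolution starting from any partition with at most k parts and last part 0 terminates, after finitely many steps, in partitions belonging to 𝒰𝒫_{n,k}. -/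
/-- `α` is a partition with at most `k` parts and last part `0`
(viewed as a weakly decreasing function on `{1,…,k}`). -/
def IsPartitionK (k : ℕ) (α : ℕ → ℕ) : Prop :=
  (∀ i j, 1 ≤ i → i ≤ j → j ≤ k → α j ≤ α i) ∧ α k = 0

/-- `α` is strictly upper triangular, i.e. `α ∈ 𝒰𝒫_{n,k}`:
`k·α_i ≤ (n−k)·(k−i)` for every `1 ≤ i ≤ k`. -/
def IsStrictlyUpperTriangular (n k : ℕ) (α : ℕ → ℕ) : Prop :=
  ∀ i, 1 ≤ i → i ≤ k → k * α i ≤ (n - k) * (k - i)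

/-- `βt` is the normalized Borel–Weil–Bott term of `α` at `i`: the `k` integers
`α_1+(k−1), …, α_{k−1}+1, i` are pairwise distinct, `δ` is their strictly
decreasing rearrangement, `β_j = δ_j − (k−j)`, and `β̃_j = β_j − β_k`. -/
def IsBWBTerm (k : ℕ) (α : ℕ → ℕ) (i : ℕ) (βt : ℕ → ℕ) : Prop :=
  ∃ f δ : ℕ → ℕ,
    (∀ j, 1 ≤ j → j ≤ k - 1 → f j = α j + (k - j)) ∧ f k = i ∧
    Set.InjOn f (Set.Icc 1 k) ∧
    (∀ j₁ j₂, 1 ≤ j₁ → j₁ < j₂ → j₂ ≤ k → δ j₂ < δ j₁) ∧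
    (Finset.Icc 1 k).image δ = (Finset.Icc 1 k).image f ∧
    ∀ j, 1 ≤ j → j ≤ k → (βt j : ℤ) = (δ j : ℤ) - ((k : ℤ) - j) - (δ k : ℤ)

/-- The staircase relation: `α ⊳ β̃` iff `α, β̃` are partitions with at most `k`
parts and last part `0`, `α ∉ 𝒰𝒫_{n,k}`, and `β̃` is the normalized
Borel–Weil–Bott term of `α` at some `1 ≤ i ≤ n`. -/
def StaircaseRel (n k : ℕ) (α βt : ℕ → ℕ) : Prop :=
  IsPartitionK k α ∧ IsPartitionK k βt ∧
    ¬ IsStrictlyUpperTriangular n k α ∧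
    ∃ i, 1 ≤ i ∧ i ≤ n ∧ IsBWBTerm k α i βt

namespace StaircaseTermination

open Finset

def cnt (k : ℕ) (s : ℕ → ℕ) (y : ℕ) : ℕ :=
  ((Finset.Icc 1 k).filter (fun j => s j < y)).card

def W (n k : ℕ) (s : ℕ → ℕ) (t : ℕ) : ℤ :=
  (k : ℤ) * t - (n : ℤ) * (cnt k s t : ℤ)

lemma cnt_zero (k : ℕ) (s : ℕ → ℕ) : cnt k s 0 = 0 := by simp [cnt]

lemma cnt_all (k : ℕ) (s : ℕ → ℕ) (y : ℕ) (h : ∀ j ∈ Finset.Icc 1 k, s j < y) :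
    cnt k s y = k := by
  rw [cnt, Finset.filter_true_of_mem h, Nat.card_Icc]; omega

lemma exists_argmax (n k : ℕ) (hn : 0 < n) (s : ℕ → ℕ) :
    ∃ u ∈ Finset.range n, ∀ t ∈ Finset.range n, W n k s t ≤ W n k s u :=
  Finset.exists_max_image _ _ ⟨0, Finset.mem_range.mpr hn⟩

noncomputable def U (n k : ℕ) (s : ℕ → ℕ) : ℕ :=
  if hn : 0 < n then Classical.choose (exists_argmax n k hn s) else 0

lemma U_spec (n k : ℕ) (hn : 0 < n) (s : ℕ → ℕ) :
    U n k s < n ∧ ∀ t ∈ Finset.range n, W n k s t ≤ W n k s (U n k s) := by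
  rw [U, dif_pos hn]
  obtain ⟨h1, h2⟩ := Classical.choose_spec (exists_argmax n k hn s)
  exact ⟨Finset.mem_range.mp h1, h2⟩

lemma W_inj (n k : ℕ) (hcop : Nat.Coprime n k) (s : ℕ → ℕ) {t t' : ℕ}
    (ht : t < n) (ht' : t' < n) (h : W n k s t = W n k s t') : t = t' := by
  have hdvd : (n : ℤ) ∣ (k : ℤ) * ((t : ℤ) - t') := by
    refine ⟨(cnt k s t : ℤ) - (cnt k s t' : ℤ), ?_⟩
    unfold W at h
    ring_nf
    ring_nf at h
    linarith
  have hco : IsCoprime (n : ℤ) (k : ℤ) := Nat.isCoprime_iff_coprime.mpr hcop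
  have hdvd2 : (n : ℤ) ∣ ((t : ℤ) - t') := hco.dvd_of_dvd_mul_left hdvd
  have habs : |(t : ℤ) - t'| < (n : ℤ) := by
    rw [abs_lt]
    constructor <;> omega
  have := Int.eq_zero_of_abs_lt_dvd hdvd2 habs
  omega

lemma cnt_at_bead (k : ℕ) (s : ℕ → ℕ)
    (hanti : ∀ j₁ j₂, 1 ≤ j₁ → j₁ < j₂ → j₂ ≤ k → s j₂ < s j₁)
    {j : ℕ} (hj1 : 1 ≤ j) (hjk : j ≤ k) :
    cnt k s (s j) = k - j := by
  have hset : (Finset.Icc 1 k).filter (fun j' => s j' < s j) = Finset.Icc (j+1) k := by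
    ext j'
    simp only [Finset.mem_filter, Finset.mem_Icc]
    constructor
    · rintro ⟨⟨h1, h2⟩, hlt⟩
      refine ⟨?_, h2⟩
      by_contra hle
      push_neg at hle
      rcases Nat.lt_or_ge j' j with h | h
      · exact absurd (hanti j' j h1 h hjk) (by omega)
      · have hj'j : j' = j := by omega
        rw [hj'j] at hlt
        omega
    · rintro ⟨h1, h2⟩
      exact ⟨⟨by omega, h2⟩, hanti j j' hj1 (by omega) h2⟩
  rw [cnt, hset, Nat.card_Icc]
  omega

lemma cnt_congr_of_image_eq (k : ℕ) (g h : ℕ → ℕ)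
    (hg : ∀ a ∈ Finset.Icc 1 k, ∀ b ∈ Finset.Icc 1 k, g a = g b → a = b)
    (hh : ∀ a ∈ Finset.Icc 1 k, ∀ b ∈ Finset.Icc 1 k, h a = h b → a = b)
    (him : (Finset.Icc 1 k).image g = (Finset.Icc 1 k).image h) (z : ℕ) :
    cnt k g z = cnt k h z := by
  have key : ∀ (g : ℕ → ℕ), (∀ a ∈ Finset.Icc 1 k, ∀ b ∈ Finset.Icc 1 k, g a = g b → a = b) →
      cnt k g z = (((Finset.Icc 1 k).image g).filter (fun x => x < z)).card := by
    intro g hg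
    have e1 : ((Finset.Icc 1 k).filter (fun j => g j < z)).image g
        = ((Finset.Icc 1 k).image g).filter (fun x => x < z) := by
      ext x
      simp only [Finset.mem_image, Finset.mem_filter]
      constructor
      · rintro ⟨j, ⟨hj, hlt⟩, rfl⟩
        exact ⟨⟨j, hj, rfl⟩, hlt⟩
      · rintro ⟨⟨j, hj, rfl⟩, hlt⟩
        exact ⟨j, ⟨hj, hlt⟩, rfl⟩
    have e2 : (((Finset.Icc 1 k).filter (fun j => g j < z)).image g).card
        = ((Finset.Icc 1 k).filter (fun j => g j < z)).card := by
      apply Finset.card_image_of_injOn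
      intro a ha b hb hab
      exact hg a (Finset.mem_of_mem_filter _ ha) b (Finset.mem_of_mem_filter _ hb) hab
    rw [cnt, ← e2, e1]
  rw [key g hg, key h hh, him]

lemma argmax_mem (n k : ℕ) (hk : 0 < k) (hn : 0 < n) (s : ℕ → ℕ)
    (hbound : ∀ j, 1 ≤ j → j ≤ k → s j ≤ n - 1)
    {u : ℕ} (hu : u < n) (hmax : ∀ t ∈ Finset.range n, W n k s t ≤ W n k s u)
    (hu1 : 1 ≤ u) : ∃ j, 1 ≤ j ∧ j ≤ k ∧ s j = u := by
  by_contra hno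
  push_neg at hno
  rcases Nat.lt_or_ge (u + 1) n with hlt | hge
  · have hcnt : cnt k s (u + 1) = cnt k s u := by
      unfold cnt
      congr 1
      apply Finset.filter_congr
      intro j hj
      rw [Finset.mem_Icc] at hj
      have := hno j hj.1 hj.2
      constructor <;> (intro; omega)
    have h1 := hmax (u + 1) (Finset.mem_range.mpr hlt)
    unfold W at h1
    rw [hcnt] at h1
    push_cast at h1
    have : (0:ℤ) < k := by exact_mod_cast hk
    linarith
  · have hun : u = n - 1 := by omega
    have hcnt : cnt k s u = k := by
      apply cnt_all
      intro j hj
      rw [Finset.mem_Icc] at hj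
      have h1 := hbound j hj.1 hj.2
      have h2 := hno j hj.1 hj.2
      omega
    have h0 := hmax 0 (Finset.mem_range.mpr hn)
    unfold W at h0
    rw [hcnt, cnt_zero] at h0
    have hkn' : (k:ℤ) * u - n * k < 0 := by
      have hun' : (u:ℤ) ≤ (n:ℤ) - 1 := by omega
      have : (k:ℤ) * u ≤ k * ((n:ℤ) - 1) :=
        mul_le_mul_of_nonneg_left hun' (by positivity)
      have hk' : (0:ℤ) < k := by exact_mod_cast hk
      nlinarith
    simp at h0
    linarith

end StaircaseTermination

namespace StaircaseTermination

open Finset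

lemma next_top_le (n k : ℕ) (hk : 1 < k) (α β : ℕ → ℕ)
    (hrel : StaircaseRel n k α β) :
    β 1 + (k - 1) ≤ max (α 1 + (k - 1)) n - 1 := by
  obtain ⟨⟨hαmono, hαk⟩, ⟨hβmono, hβk⟩, hnup, i, hi1, hin, f, δ, hf, hfk, hinj, hδ, him, hβeq⟩ := hrel
  have hk0 : 1 ≤ k := by omega
  have hf_le : ∀ j, 1 ≤ j → j ≤ k → f j ≤ max (α 1 + (k - 1)) n := by
    intro j h1 h2
    by_cases hjk : j = k
    · rw [hjk, hfk]; exact le_max_of_le_right hin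
    · have hj : j ≤ k - 1 := by omega
      rw [hf j h1 hj]
      have := hαmono 1 j le_rfl h1 h2
      exact le_max_of_le_left (by omega)
  have hf_ge1 : ∀ j, 1 ≤ j → j ≤ k → 1 ≤ f j := by
    intro j h1 h2
    by_cases hjk : j = k
    · rw [hjk, hfk]; exact hi1
    · have hj : j ≤ k - 1 := by omega
      rw [hf j h1 hj]
      omega
  have hδ_as_f : ∀ j, 1 ≤ j → j ≤ k → ∃ j', (1 ≤ j' ∧ j' ≤ k) ∧ f j' = δ j := by
    intro j h1 h2
    have hmem : δ j ∈ (Finset.Icc 1 k).image δ :=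
      Finset.mem_image_of_mem _ (Finset.mem_Icc.mpr ⟨h1, h2⟩)
    rw [him] at hmem
    obtain ⟨j', hj', hfj'⟩ := Finset.mem_image.mp hmem
    exact ⟨j', Finset.mem_Icc.mp hj', hfj'⟩
  have hδ1_le : δ 1 ≤ max (α 1 + (k - 1)) n := by
    obtain ⟨j', ⟨h1', h2'⟩, hj'⟩ := hδ_as_f 1 le_rfl hk0
    rw [← hj']; exact hf_le j' h1' h2'
  have hδk1 : 1 ≤ δ k := by
    obtain ⟨j', ⟨h1', h2'⟩, hj'⟩ := hδ_as_f k hk0 le_rfl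
    rw [← hj']; exact hf_ge1 j' h1' h2'
  have hδk_le : δ k ≤ δ 1 := (hδ 1 k le_rfl hk le_rfl).le
  have hβ1 : (β 1 : ℤ) = (δ 1 : ℤ) - ((k : ℤ) - 1) - (δ k : ℤ) := by
    have := hβeq 1 le_rfl hk0
    push_cast at this ⊢
    exact this
  omega

end StaircaseTermination

namespace StaircaseTermination

open Finset

lemma key_step (n k : ℕ) (hcop : Nat.Coprime n k) (hk : 1 < k) (hkn : k < n)
    (α β : ℕ → ℕ) (hrel : StaircaseRel n k α β)
    (hreg : α 1 + (k - 1) ≤ n - 1) :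
    U n k (fun j => β j + (k - j)) < U n k (fun j => α j + (k - j)) := by
  obtain ⟨⟨hαmono, hαk⟩, ⟨hβmono, hβk⟩, hnup, i, hi1, hin, f, δ, hf, hfk, hinj, hδ, him, hβeq⟩ := hrel
  have hn : 0 < n := by omega
  have hk0 : 0 < k := by omega
  set s : ℕ → ℕ := fun j => α j + (k - j) with hs
  set s' : ℕ → ℕ := fun j => β j + (k - j) with hs'
  -- basic bead facts
  have hanti : ∀ j₁ j₂, 1 ≤ j₁ → j₁ < j₂ → j₂ ≤ k → s j₂ < s j₁ := by
    intro j₁ j₂ h1 h2 h3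
    have := hαmono j₁ j₂ h1 (le_of_lt h2) h3
    simp only [hs]
    omega
  have hsk : s k = 0 := by simp only [hs]; omega
  have hsle : ∀ j, 1 ≤ j → j ≤ k → s j ≤ n - 1 := by
    intro j h1 h2
    have := hαmono 1 j le_rfl h1 h2
    simp only [hs] at hreg ⊢
    omega
  -- violation
  have hviol : ∃ j, 1 ≤ j ∧ j ≤ k ∧ n * (k - j) < k * s j := by
    unfold IsStrictlyUpperTriangular at hnup
    push_neg at hnup
    obtain ⟨j, h1, h2, h3⟩ := hnup
    refine ⟨j, h1, h2, ?_⟩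
    have e1 : k * s j = k * α j + k * (k - j) := by simp only [hs]; ring
    have e2 : n * (k - j) = (n - k) * (k - j) + k * (k - j) := by
      rw [← Nat.add_mul, Nat.sub_add_cancel hkn.le]
    omega
  -- f facts
  have hf1 : ∀ j, 1 ≤ j → j ≤ k → 1 ≤ f j := by
    intro j h1 h2
    by_cases hjk : j = k
    · rw [hjk, hfk]; exact hi1
    · rw [hf j h1 (by omega)]; omega
  have hfn : ∀ j, 1 ≤ j → j ≤ k → f j ≤ n := by
    intro j h1 h2
    by_cases hjk : j = k
    · rw [hjk, hfk]; exact hin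
    · rw [hf j h1 (by omega)]
      have := hsle j h1 h2
      simp only [hs] at this
      omega
  -- injectivity in Finset form
  have hfinj : ∀ a ∈ Finset.Icc 1 k, ∀ b ∈ Finset.Icc 1 k, f a = f b → a = b := by
    intro a ha b hb hab
    rw [Finset.mem_Icc] at ha hb
    exact hinj ⟨ha.1, ha.2⟩ ⟨hb.1, hb.2⟩ hab
  have hδinj : ∀ a ∈ Finset.Icc 1 k, ∀ b ∈ Finset.Icc 1 k, δ a = δ b → a = b := by
    intro a ha b hb hab
    rw [Finset.mem_Icc] at ha hb
    by_contra hne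
    rcases Nat.lt_or_ge a b with h | h
    · have := hδ a b ha.1 h hb.2; omega
    · have hba : b < a := by omega
      have := hδ b a hb.1 hba ha.2; omega
  -- δ image facts
  have hδ_as_f : ∀ j, 1 ≤ j → j ≤ k → ∃ j', (1 ≤ j' ∧ j' ≤ k) ∧ f j' = δ j := by
    intro j h1 h2
    have hmem : δ j ∈ (Finset.Icc 1 k).image δ :=
      Finset.mem_image_of_mem _ (Finset.mem_Icc.mpr ⟨h1, h2⟩)
    rw [him] at hmem
    obtain ⟨j', hj', hfj'⟩ := Finset.mem_image.mp hmem
    exact ⟨j', Finset.mem_Icc.mp hj', hfj'⟩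
  have hf_as_δ : ∀ j, 1 ≤ j → j ≤ k → ∃ j', (1 ≤ j' ∧ j' ≤ k) ∧ δ j' = f j := by
    intro j h1 h2
    have hmem : f j ∈ (Finset.Icc 1 k).image f :=
      Finset.mem_image_of_mem _ (Finset.mem_Icc.mpr ⟨h1, h2⟩)
    rw [← him] at hmem
    obtain ⟨j', hj', hfj'⟩ := Finset.mem_image.mp hmem
    exact ⟨j', Finset.mem_Icc.mp hj', hfj'⟩
  have hδk1 : 1 ≤ δ k := by
    obtain ⟨j', ⟨h1', h2'⟩, hj'⟩ := hδ_as_f k hk0 le_rfl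
    rw [← hj']; exact hf1 j' h1' h2'
  have hδk_le_f : ∀ j, 1 ≤ j → j ≤ k → δ k ≤ f j := by
    intro j h1 h2
    obtain ⟨j', ⟨h1', h2'⟩, hj'⟩ := hf_as_δ j h1 h2
    rw [← hj']
    rcases eq_or_lt_of_le h2' with h | h
    · rw [h]
    · exact (hδ j' k h1' h le_rfl).le
  have hδ_ge : ∀ j, 1 ≤ j → j ≤ k → δ k ≤ δ j := by
    intro j h1 h2
    rcases eq_or_lt_of_le h2 with h | h
    · rw [h]
    · exact (hδ j k h1 h le_rfl).le
  -- s' values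
  have hs'val : ∀ j, 1 ≤ j → j ≤ k → s' j = δ j - δ k := by
    intro j h1 h2
    have hc := hβeq j h1 h2
    have hge := hδ_ge j h1 h2
    have hcast : ((k - j : ℕ) : ℤ) = (k : ℤ) - (j : ℤ) := by omega
    have : (s' j : ℤ) = (δ j : ℤ) - (δ k : ℤ) := by
      simp only [hs']
      push_cast [hcast]
      omega
    omega
  -- counting transfer
  have hcnt' : ∀ y, cnt k s' y = cnt k f (δ k + y) := by
    intro y
    have e1 : cnt k s' y = cnt k δ (δ k + y) := by
      unfold cnt
      congr 1
      apply Finset.filter_congr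
      intro j hj
      rw [Finset.mem_Icc] at hj
      have hv := hs'val j hj.1 hj.2
      have hge := hδ_ge j hj.1 hj.2
      constructor <;> (intro; omega)
    rw [e1]
    exact cnt_congr_of_image_eq k δ f hδinj hfinj him (δ k + y)
  -- counting relation
  have hcnt_rel : ∀ y, cnt k f y + (if 0 < y then 1 else 0)
      = cnt k s y + (if i < y then 1 else 0) := by
    intro y
    have hsplit : Finset.Icc 1 k = insert k (Finset.Icc 1 (k - 1)) := by
      ext j; simp only [Finset.mem_Icc, Finset.mem_insert]; omega
    have hknot : k ∉ Finset.Icc 1 (k - 1) := by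
      simp only [Finset.mem_Icc]; omega
    have hcard : ∀ (g : ℕ → ℕ), cnt k g y
        = ((Finset.Icc 1 (k - 1)).filter (fun j => g j < y)).card
          + (if g k < y then 1 else 0) := by
      intro g
      rw [cnt, hsplit, Finset.filter_insert]
      split
      · rw [Finset.card_insert_of_notMem
          (fun hmem => hknot (Finset.mem_of_mem_filter _ hmem))]
      · omega
    have hagree : ((Finset.Icc 1 (k - 1)).filter (fun j => f j < y)).card
        = ((Finset.Icc 1 (k - 1)).filter (fun j => s j < y)).card := by
      congr 1
      apply Finset.filter_congr
      intro j hj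
      rw [Finset.mem_Icc] at hj
      rw [hf j hj.1 hj.2]
    rw [hcard f, hcard s, hagree, hfk, hsk]
    split_ifs <;> omega
  -- U's
  obtain ⟨hult, humax⟩ := U_spec n k hn s
  obtain ⟨hu'lt, hu'max⟩ := U_spec n k hn s'
  set u := U n k s with hu_def
  set u' := U n k s' with hu'_def
  show u' < u
  -- W s u ≥ 1 and u ≥ 1
  obtain ⟨jv, hjv1, hjvk, hjviol⟩ := hviol
  have hWv : (1:ℤ) ≤ W n k s (s jv) := by
    unfold W
    rw [cnt_at_bead k s hanti hjv1 hjvk]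
    have : (n:ℤ) * ((k - jv : ℕ) : ℤ) < (k:ℤ) * ((s jv : ℕ) : ℤ) := by
      exact_mod_cast hjviol
    linarith
  have hsjvlt : s jv < n := by have := hsle jv hjv1 hjvk; omega
  have hWu1 : (1:ℤ) ≤ W n k s u :=
    le_trans hWv (humax _ (Finset.mem_range.mpr hsjvlt))
  have hu1 : 1 ≤ u := by
    by_contra h
    have hu0 : u = 0 := by omega
    rw [hu0] at hWu1
    unfold W at hWu1
    rw [cnt_zero] at hWu1
    simp at hWu1
  -- assume u ≤ u'
  by_contra hcon
  push_neg at hcon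
  -- u is a bead
  obtain ⟨j₀, hj₀1, hj₀k, hj₀⟩ := argmax_mem n k hk0 hn s hsle hult humax hu1
  have hj₀k' : j₀ ≤ k - 1 := by
    rcases eq_or_lt_of_le hj₀k with h | h
    · rw [h] at hj₀; rw [hsk] at hj₀; omega
    · omega
  have hfj₀ : f j₀ = u := by
    rw [hf j₀ hj₀1 hj₀k']
    simpa only [hs] using hj₀
  have hm_le_u : δ k ≤ u := hfj₀ ▸ hδk_le_f j₀ hj₀1 hj₀k
  have hm_le_i : δ k ≤ i := hfk ▸ hδk_le_f k hk0 le_rfl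
  have hu'1 : 1 ≤ u' := le_trans hu1 hcon
  -- W s' u' ≥ 1
  have hW'0 : W n k s' 0 = 0 := by
    unfold W; rw [cnt_zero]; simp
  have hW'pos : (1:ℤ) ≤ W n k s' u' := by
    have h1 := hu'max 0 (Finset.mem_range.mpr hn)
    have hne : W n k s' u' ≠ W n k s' 0 := by
      intro h
      have := W_inj n k hcop s' hu'lt hn h
      omega
    rw [hW'0] at h1 hne
    omega
  -- δ k + u' ≤ n
  have hτn : δ k + u' ≤ n := by
    by_contra h
    push_neg at h
    have hcall1 : cnt k s' u' = k := by
      rw [hcnt' u']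
      apply cnt_all
      intro j hj
      rw [Finset.mem_Icc] at hj
      have := hfn j hj.1 hj.2
      omega
    unfold W at hW'pos
    rw [hcall1] at hW'pos
    have h2 : (k:ℤ) * u' ≤ (k:ℤ) * ((n:ℤ) - 1) :=
      mul_le_mul_of_nonneg_left (by omega) (by positivity)
    have hk' : (0:ℤ) < k := by exact_mod_cast hk0
    have h3 : (k:ℤ) * ((n:ℤ) - 1) = (k:ℤ) * (n:ℤ) - k := by ring
    have h4 : (n:ℤ) * (k:ℤ) = (k:ℤ) * (n:ℤ) := by ring
    linarith
  -- inequality 1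
  have hx₀lt : u - δ k < n := by omega
  have hineq1 : W n k s' (u - δ k) + 1 ≤ W n k s' u' := by
    have h1 := hu'max (u - δ k) (Finset.mem_range.mpr hx₀lt)
    have hne : W n k s' (u - δ k) ≠ W n k s' u' := by
      intro h
      have := W_inj n k hcop s' hx₀lt hu'lt h
      omega
    omega
  have e1 : W n k s' u' = (k:ℤ) * u' - (n:ℤ) * (cnt k f (δ k + u') : ℤ) := by
    unfold W; rw [hcnt']
  have e2 : W n k s' (u - δ k)
      = (k:ℤ) * u - (k:ℤ) * (δ k : ℤ) - (n:ℤ) * (cnt k f u : ℤ) := by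
    unfold W
    rw [hcnt']
    have hh : δ k + (u - δ k) = u := by omega
    rw [hh]
    have hcast : ((u - δ k : ℕ) : ℤ) = (u:ℤ) - (δ k : ℤ) := by omega
    rw [hcast]
    ring
  rw [e1, e2] at hineq1
  -- inequality 2
  have hineq2 : (k:ℤ) * (δ k : ℤ) + (k:ℤ) * u'
      - (n:ℤ) * (cnt k s (δ k + u') : ℤ) + 1 ≤ (k:ℤ) * u - (n:ℤ) * (cnt k s u : ℤ) := by
    rcases eq_or_lt_of_le hτn with he | hlt
    · have hcall : cnt k s (δ k + u') = k := by
        apply cnt_all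
        intro j hj
        rw [Finset.mem_Icc] at hj
        have := hsle j hj.1 hj.2
        omega
      rw [hcall]
      have hsum : (k:ℤ) * (δ k : ℤ) + (k:ℤ) * u' = (k:ℤ) * (n:ℤ) := by
        have : ((δ k : ℕ) : ℤ) + (u' : ℤ) = (n : ℤ) := by omega
        rw [← this]; ring
      unfold W at hWu1
      linarith
    · have h1 := humax (δ k + u') (Finset.mem_range.mpr hlt)
      have hne : W n k s (δ k + u') ≠ W n k s u := by
        intro h
        have := W_inj n k hcop s hlt hult h
        omega
      unfold W at h1 hne
      have hcast : ((δ k + u' : ℕ) : ℤ) = (δ k : ℤ) + (u' : ℤ) := by push_cast; ring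
      rw [hcast] at h1 hne
      have hexp : (k:ℤ) * ((δ k : ℤ) + (u' : ℤ)) = (k:ℤ) * (δ k : ℤ) + (k:ℤ) * u' := by ring
      rw [hexp] at h1 hne
      unfold W at hWu1
      rcases lt_or_eq_of_le h1 with h | h
      · omega
      · exact absurd h hne
  -- combine via count relations
  have hrel_u := hcnt_rel u
  have hrel_τ := hcnt_rel (δ k + u')
  rw [if_pos (by omega : 0 < u)] at hrel_u
  rw [if_pos (by omega : 0 < δ k + u')] at hrel_τ
  by_cases hiu : i < u <;> by_cases hiτ : i < δ k + u'
  · -- i < u, i < τ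
    rw [if_pos hiu] at hrel_u
    rw [if_pos hiτ] at hrel_τ
    have c1 : (n:ℤ) * (cnt k f u : ℤ) = (n:ℤ) * (cnt k s u : ℤ) := by
      have : (cnt k f u : ℤ) = (cnt k s u : ℤ) := by omega
      rw [this]
    have c2 : (n:ℤ) * (cnt k f (δ k + u') : ℤ) = (n:ℤ) * (cnt k s (δ k + u') : ℤ) := by
      have : (cnt k f (δ k + u') : ℤ) = (cnt k s (δ k + u') : ℤ) := by omega
      rw [this]
    linarith
  · -- i < u, τ ≤ i : ordering contradiction
    push_neg at hiτ
    omega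
  · -- u ≤ i, i < τ
    push_neg at hiu
    rw [if_neg (by omega : ¬ i < u)] at hrel_u
    rw [if_pos hiτ] at hrel_τ
    have c1 : (n:ℤ) * (cnt k s u : ℤ) = (n:ℤ) * (cnt k f u : ℤ) + (n:ℤ) := by
      have : (cnt k s u : ℤ) = (cnt k f u : ℤ) + 1 := by omega
      rw [this]; ring
    have c2 : (n:ℤ) * (cnt k f (δ k + u') : ℤ) = (n:ℤ) * (cnt k s (δ k + u') : ℤ) := by
      have : (cnt k f (δ k + u') : ℤ) = (cnt k s (δ k + u') : ℤ) := by omega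
      rw [this]
    have hn' : (0:ℤ) ≤ n := by positivity
    linarith
  · -- u ≤ i, τ ≤ i
    push_neg at hiu hiτ
    rw [if_neg (by omega : ¬ i < u)] at hrel_u
    rw [if_neg (by omega : ¬ i < δ k + u')] at hrel_τ
    have c1 : (n:ℤ) * (cnt k s u : ℤ) = (n:ℤ) * (cnt k f u : ℤ) + (n:ℤ) := by
      have : (cnt k s u : ℤ) = (cnt k f u : ℤ) + 1 := by omega
      rw [this]; ring
    have c2 : (n:ℤ) * (cnt k s (δ k + u') : ℤ)
        = (n:ℤ) * (cnt k f (δ k + u') : ℤ) + (n:ℤ) := by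
      have : (cnt k s (δ k + u') : ℤ) = (cnt k f (δ k + u') : ℤ) + 1 := by omega
      rw [this]; ring
    linarith

end StaircaseTermination

/-- For `n, k` coprime with `1 < k < n` there is no infinite chain
`α⁰ ⊳ α¹ ⊳ α² ⊳ ⋯` for the staircase relation: iterating the staircase
resolution terminates after finitely many steps in partitions of `𝒰𝒫_{n,k}`. -/
theorem staircase_relation_terminates
    (n k : ℕ) (hcop : Nat.Coprime n k) (hk : 1 < k) (hkn : k < n) :
    ¬ ∃ A : ℕ → ℕ → ℕ, ∀ m, StaircaseRel n k (A m) (A (m + 1)) := by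
  rintro ⟨A, hA⟩
  have hn : 0 < n := by omega
  let g : ℕ → ℕ := fun m =>
    if n ≤ A m 1 + (k - 1) then n + (A m 1 + (k - 1))
    else StaircaseTermination.U n k (fun j => A m j + (k - j))
  have hdec : ∀ m, g (m + 1) < g m := by
    intro m
    have htop := StaircaseTermination.next_top_le n k hk (A m) (A (m + 1)) (hA m)
    by_cases hbig : n ≤ A m 1 + (k - 1)
    · have h1 : A (m + 1) 1 + (k - 1) ≤ A m 1 + (k - 1) - 1 := by omega
      by_cases hbig2 : n ≤ A (m + 1) 1 + (k - 1)
      · simp only [g, if_pos hbig, if_pos hbig2]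
        omega
      · simp only [g, if_pos hbig, if_neg hbig2]
        have := (StaircaseTermination.U_spec n k hn (fun j => A (m + 1) j + (k - j))).1
        omega
    · push_neg at hbig
      have hreg : A m 1 + (k - 1) ≤ n - 1 := by omega
      have h1 : ¬ n ≤ A (m + 1) 1 + (k - 1) := by omega
      have hkey := StaircaseTermination.key_step n k hcop hk hkn (A m) (A (m + 1))
        (hA m) hreg
      simp only [g, if_neg (by omega : ¬ n ≤ A m 1 + (k - 1)), if_neg h1]
      exact hkey
  have hmono : ∀ m, g m + m ≤ g 0 := by
    intro m
    induction m with
    | zero => omega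
    | succ m ih =>
      have := hdec m
      omega
  have := hmono (g 0 + 1)
  omega
end
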